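/- Let A be an N×M matrix, and let J, S be disjoint index sets with |J ∪ S| ≤ 2L. Suppose every eigenvalue of (1/N)A_K* A_K lies in [(1−c)², (1+c)²] for all K with |K| = 2L, where 0 < c < 1. Then the spectral norm of (1/N)A_J* A_S is at most (1+c)² − 1 = 2c + c². -/

import Mathlib

open Matrix
open scoped Matrix.Norms.L2Operator

private lemma l2_norm_le_of_mulVec {m n : Type*} [Fintype m] [Fintype n] [DecidableEq n]
    (B : Matrix m n ℝ) {C : ℝ} (hC : 0 ≤ C)
    (h : ∀ x : n → ℝ, Real.sqrt (∑ i, (B *ᵥ x) i ^ 2) ≤ C * Real.sqrt (∑ j, x j ^ 2)) :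
    ‖B‖ ≤ C := by
  rw [Matrix.l2_opNorm_def]
  refine ContinuousLinearMap.opNorm_le_bound _ hC fun x => ?_
  have h1 : ‖(Matrix.toEuclideanLin.trans LinearMap.toContinuousLinearMap B) x‖
      = Real.sqrt (∑ i, (B *ᵥ (WithLp.equiv 2 (n → ℝ) x)) i ^ 2) := by
    rw [EuclideanSpace.norm_eq]
    congr 1
    refine Finset.sum_congr rfl fun i _ => ?_
    rw [Real.norm_eq_abs, sq_abs]
    rfl
  have h2 : ‖x‖ = Real.sqrt (∑ j, (WithLp.equiv 2 (n → ℝ) x) j ^ 2) := by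
    rw [EuclideanSpace.norm_eq]
    congr 1
    refine Finset.sum_congr rfl fun j _ => ?_
    rw [Real.norm_eq_abs, sq_abs]
    rfl
  rw [h1, h2]
  exact h _

private lemma l2_norm_submatrix_le {m n m' n' : Type*} [Fintype m] [Fintype n] [Fintype m']
    [Fintype n'] [DecidableEq m] [DecidableEq n] [DecidableEq n']
    (B : Matrix m n ℝ) {e : m' → m} {f : n' → n} (he : Function.Injective e)
    (hf : Function.Injective f) : ‖B.submatrix e f‖ ≤ ‖B‖ := by
  apply l2_norm_le_of_mulVec _ (norm_nonneg B)
  intro x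
  set y : n → ℝ := Function.extend f x 0 with hy
  have hyval : ∀ j, y (f j) = x j := fun j => hf.extend_apply x 0 j
  have hyzero : ∀ k, k ∉ Finset.univ.image f → y k = 0 := by
    intro k hk
    rw [hy, Function.extend_def]
    rw [dif_neg]
    · rfl
    · rintro ⟨j, rfl⟩
      exact hk (Finset.mem_image_of_mem f (Finset.mem_univ j))
  have hyx : ∑ k, y k ^ 2 = ∑ j, x j ^ 2 := by
    rw [← Finset.sum_subset (Finset.subset_univ (Finset.univ.image f))
      (fun k _ hk => by rw [hyzero k hk]; ring)]
    rw [Finset.sum_image (fun a _ b _ hab => hf hab)]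
    exact Finset.sum_congr rfl fun j _ => by rw [hyval]
  have hmul : ∀ i, (B.submatrix e f *ᵥ x) i = (B *ᵥ y) (e i) := by
    intro i
    simp only [Matrix.mulVec, dotProduct, Matrix.submatrix_apply]
    rw [← Finset.sum_subset (Finset.subset_univ (Finset.univ.image f))
      (fun k _ hk => by rw [hyzero k hk]; ring)]
    rw [Finset.sum_image (fun a _ b _ hab => hf hab)]
    exact Finset.sum_congr rfl fun j _ => by rw [hyval]
  calc Real.sqrt (∑ i, (B.submatrix e f *ᵥ x) i ^ 2)
      = Real.sqrt (∑ i, ((B *ᵥ y) (e i)) ^ 2) := by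
        congr 1; exact Finset.sum_congr rfl fun i _ => by rw [hmul]
    _ ≤ Real.sqrt (∑ k, ((B *ᵥ y) k) ^ 2) := by
        apply Real.sqrt_le_sqrt
        have himg : ∑ i : m', ((B *ᵥ y) (e i)) ^ 2
            = ∑ k ∈ Finset.univ.image e, ((B *ᵥ y) k) ^ 2 :=
          (Finset.sum_image (f := fun k => ((B *ᵥ y) k) ^ 2) (g := e)
            (fun a _ b _ hab => he hab)).symm
        rw [himg]
        exact Finset.sum_le_sum_of_subset_of_nonneg (Finset.subset_univ _)
          (fun k _ _ => sq_nonneg _)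
    _ ≤ ‖B‖ * Real.sqrt (∑ j, x j ^ 2) := by
        have := B.l2_opNorm_mulVec ((WithLp.equiv 2 (n → ℝ)).symm y)
        have hl : ‖(EuclideanSpace.equiv m ℝ).symm (B *ᵥ (WithLp.equiv 2 (n → ℝ)).symm y)‖
            = Real.sqrt (∑ k, ((B *ᵥ y) k) ^ 2) := by
          rw [EuclideanSpace.norm_eq]
          congr 1
          exact Finset.sum_congr rfl fun k _ => by rw [Real.norm_eq_abs, sq_abs]; rfl
        have hr : ‖(WithLp.equiv 2 (n → ℝ)).symm y‖ = Real.sqrt (∑ j, x j ^ 2) := by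
          rw [EuclideanSpace.norm_eq, ← hyx]
          congr 1
          exact Finset.sum_congr rfl fun k _ => by rw [Real.norm_eq_abs, sq_abs]; rfl
        rw [hl, hr] at this
        exact this

private lemma l2_norm_diagonal_le {n : Type*} [Fintype n] [DecidableEq n]
    (d : n → ℝ) {r : ℝ} (hr : 0 ≤ r) (h : ∀ i, |d i| ≤ r) :
    ‖Matrix.diagonal d‖ ≤ r := by
  apply l2_norm_le_of_mulVec _ hr
  intro x
  have : ∑ i, (Matrix.diagonal d *ᵥ x) i ^ 2 ≤ r ^ 2 * ∑ j, x j ^ 2 := by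
    rw [Finset.mul_sum]
    refine Finset.sum_le_sum fun i _ => ?_
    rw [Matrix.mulVec_diagonal, mul_pow]
    have : d i ^ 2 ≤ r ^ 2 := by
      rw [← sq_abs]
      exact pow_le_pow_left₀ (abs_nonneg _) (h i) 2
    nlinarith [sq_nonneg (x i)]
  calc Real.sqrt (∑ i, (Matrix.diagonal d *ᵥ x) i ^ 2)
      ≤ Real.sqrt (r ^ 2 * ∑ j, x j ^ 2) := Real.sqrt_le_sqrt this
    _ = r * Real.sqrt (∑ j, x j ^ 2) := by
        rw [Real.sqrt_mul (sq_nonneg r), Real.sqrt_sq hr]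

private lemma herm_norm_le_of_spectrum {n : Type*} [Fintype n] [DecidableEq n]
    {B : Matrix n n ℝ} (hB : B.IsHermitian) {r : ℝ} (hr : 0 ≤ r)
    (h : ∀ μ ∈ spectrum ℝ B, |μ| ≤ r) : ‖B‖ ≤ r := by
  conv_lhs => rw [hB.spectral_theorem]
  rw [Unitary.conjStarAlgAut_apply, CStarRing.norm_mul_mem_unitary _ (Unitary.star_mem (hB.eigenvectorUnitary).2),
    CStarRing.norm_mem_unitary_mul _ (hB.eigenvectorUnitary).2]
  apply l2_norm_diagonal_le _ hr
  intro i
  have := hB.eigenvalues_mem_spectrum_real i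
  simpa using h _ this

/-- If every eigenvalue of `(1/N) A_K* A_K` lies in `[(1−c)², (1+c)²]` for all `K`
with `|K| = 2L` (`0 < c < 1`), then for disjoint `J, S` with `|J ∪ S| ≤ 2L` the
spectral norm of `(1/N) A_J* A_S` is at most `(1+c)² − 1 = 2c + c²`. -/
theorem stmt8 (N M L : ℕ) (A : Matrix (Fin N) (Fin M) ℝ) (c : ℝ)
    (hc0 : 0 < c) (hc1 : c < 1) (h2L : 2 * L ≤ M)
    (heig : ∀ K : Finset (Fin M), K.card = 2 * L →
      ∀ μ ∈ spectrum ℝ ((N : ℝ)⁻¹ •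
          ((A.submatrix id (fun k : K => (k : Fin M))).transpose *
            A.submatrix id (fun k : K => (k : Fin M)))),
        μ ∈ Set.Icc ((1 - c) ^ 2) ((1 + c) ^ 2))
    (J S : Finset (Fin M)) (hdisj : Disjoint J S) (hcard : (J ∪ S).card ≤ 2 * L) :
    ‖(N : ℝ)⁻¹ • ((A.submatrix id (fun j : J => (j : Fin M))).transpose *
        A.submatrix id (fun s : S => (s : Fin M)))‖ ≤ 2 * c + c ^ 2 := by
  obtain ⟨K, hJSK, -, hKcard⟩ := Finset.exists_subsuperset_card_eq
    (Finset.subset_univ (J ∪ S)) hcard (by simpa using h2L)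
  set G : Matrix K K ℝ := (N : ℝ)⁻¹ •
    ((A.submatrix id (fun k : K => (k : Fin M))).transpose *
      A.submatrix id (fun k : K => (k : Fin M))) with hG
  -- G - 1 is Hermitian
  have hBH : ((A.submatrix id (fun k : K => (k : Fin M))).transpose *
      A.submatrix id (fun k : K => (k : Fin M))).IsHermitian := by
    have := Matrix.isHermitian_conjTranspose_mul_self (A.submatrix id (fun k : K => (k : Fin M)))
    simpa [Matrix.conjTranspose_eq_transpose_of_trivial] using this
  have hGH : (G - 1).IsHermitian := by
    refine Matrix.IsHermitian.sub ?_ Matrix.isHermitian_one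
    show _ᴴ = _
    rw [Matrix.conjTranspose_smul, hBH.eq, star_trivial]
  -- spectrum bound for G - 1
  have hspecG : ∀ μ ∈ spectrum ℝ G, μ ∈ Set.Icc ((1 - c) ^ 2) ((1 + c) ^ 2) :=
    heig K hKcard
  have hspec : ∀ μ ∈ spectrum ℝ (G - 1), |μ| ≤ 2 * c + c ^ 2 := by
    intro μ hμ
    have hset := spectrum.sub_singleton_eq G (1 : ℝ)
    rw [_root_.map_one] at hset
    rw [← hset, Set.mem_sub] at hμ
    obtain ⟨ν, hν, b, hb, hνb⟩ := hμ
    rw [Set.mem_singleton_iff] at hb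
    subst hb
    obtain ⟨hν1, hν2⟩ := hspecG ν hν
    rw [abs_le]
    constructor <;> nlinarith
  have hnorm1 : ‖G - 1‖ ≤ 2 * c + c ^ 2 :=
    herm_norm_le_of_spectrum hGH (by nlinarith) hspec
  -- the target is a submatrix of G - 1
  set eJ : J → K := fun j => ⟨j.1, hJSK (Finset.mem_union_left _ j.2)⟩ with heJdef
  set eS : S → K := fun s => ⟨s.1, hJSK (Finset.mem_union_right _ s.2)⟩ with heSdef
  have heJ : Function.Injective eJ := by
    intro a b hab
    apply Subtype.ext
    have := congrArg Subtype.val hab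
    simpa [heJdef] using this
  have heS : Function.Injective eS := by
    intro a b hab
    apply Subtype.ext
    have := congrArg Subtype.val hab
    simpa [heSdef] using this
  have heq : (N : ℝ)⁻¹ • ((A.submatrix id (fun j : J => (j : Fin M))).transpose *
      A.submatrix id (fun s : S => (s : Fin M))) = (G - 1).submatrix eJ eS := by
    ext j s
    have hne : eJ j ≠ eS s := by
      intro hjs
      have : (j : Fin M) = (s : Fin M) := congrArg Subtype.val hjs
      have hjS : (j : Fin M) ∈ S := this ▸ s.2
      exact (Finset.disjoint_left.mp hdisj j.2) hjS
    rw [Matrix.submatrix_apply, Matrix.sub_apply, Matrix.one_apply_ne hne, sub_zero]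
    simp [hG, Matrix.sub_apply, Matrix.smul_apply, Matrix.mul_apply,
      Matrix.submatrix_apply, Matrix.one_apply_ne hne, heJdef, heSdef]
  rw [heq]
  exact (l2_norm_submatrix_le _ heJ heS).trans hnorm1
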